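/- Let U be a tied incomplete ranking on {1,…,n} with consistent set S_U and ranked item set B_U with |B_U| = k, and let i ∉ B_U be an unranked item. Then the relative position of i among the ranked items is uniform: for every r ∈ {0,1,…,k}, #{π ∈ S_U : #{b ∈ B_U : π(b) < π(i)} = r} = |S_U|/(k+1). -/

import Mathlib

/-- A tied incomplete ranking on `{1,…,n}`: a sequence `A 0, …, A (K-1)` of nonempty
pairwise disjoint subsets of `Fin n`; all items in `A s` are preferred to all items
in `A t` for `s < t`. -/
structure TIR (n : ℕ) where
  K : ℕ
  A : Fin K → Finset (Fin n)
  nonempty : ∀ s, (A s).Nonempty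
  disjoint : ∀ s t, s ≠ t → Disjoint (A s) (A t)

/-- The set of permutations consistent with a tied incomplete ranking `U`. -/
def TIR.consistent {n : ℕ} (U : TIR n) : Finset (Equiv.Perm (Fin n)) :=
  Finset.univ.filter (fun π => ∀ s t : Fin U.K, s < t →
    ∀ a ∈ U.A s, ∀ b ∈ U.A t, π a < π b)

/-- The set `B_U` of items ranked by `U`. -/
def TIR.ranked {n : ℕ} (U : TIR n) : Finset (Fin n) :=
  Finset.univ.biUnion U.A

namespace TIRProof

variable {n : ℕ}

lemma mem_consistent {U : TIR n} {π : Equiv.Perm (Fin n)} :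
    π ∈ U.consistent ↔ ∀ s t : Fin U.K, s < t → ∀ a ∈ U.A s, ∀ b ∈ U.A t, π a < π b := by
  simp [TIR.consistent]

lemma mem_ranked {U : TIR n} {a : Fin n} {s : Fin U.K} (h : a ∈ U.A s) : a ∈ U.ranked :=
  Finset.mem_biUnion.2 ⟨s, Finset.mem_univ _, h⟩

lemma swap_apply_mem (π : Equiv.Perm (Fin n)) {B : Finset (Fin n)} {i b x : Fin n}
    (hi : i ∉ B) (hx : x ∈ B) :
    (π * Equiv.swap i b) x = if x = b then π i else π x := by
  have hxi : x ≠ i := fun h => hi (h ▸ hx)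
  by_cases h : x = b
  · subst h; simp [Equiv.Perm.mul_apply]
  · simp [Equiv.Perm.mul_apply, Equiv.swap_apply_of_ne_of_ne hxi h, h]

lemma swap_lt (π : Equiv.Perm (Fin n)) {B : Finset (Fin n)} {i b : Fin n}
    (hi : i ∉ B) (hbet : ∀ c ∈ B, c ≠ b → (π c < π i ↔ π c < π b))
    {a a' : Fin n} (ha : a ∈ B) (ha' : a' ∈ B) :
    ((π * Equiv.swap i b) a < (π * Equiv.swap i b) a' ↔ π a < π a') := by
  have hai : a ≠ i := fun h => hi (h ▸ ha)
  have ha'i : a' ≠ i := fun h => hi (h ▸ ha')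
  rw [swap_apply_mem π hi ha, swap_apply_mem π hi ha']
  by_cases h1 : a = b
  · by_cases h2 : a' = b
    · subst h1; subst h2; simp
    · rw [if_pos h1, if_neg h2]
      subst h1
      have hb := hbet a' ha' h2
      have hne1 : (π a').val ≠ (π i).val := fun h => ha'i (π.injective (Fin.ext h))
      have hne2 : (π a').val ≠ (π a).val := fun h => h2 (π.injective (Fin.ext h))
      simp only [Fin.lt_def] at hb ⊢
      omega
  · by_cases h2 : a' = b
    · rw [if_neg h1, if_pos h2]
      subst h2
      exact hbet a ha h1
    · rw [if_neg h1, if_neg h2]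

lemma filter_swap_up (π : Equiv.Perm (Fin n)) {B : Finset (Fin n)} {i b : Fin n}
    (hi : i ∉ B) (hb : b ∈ B) (hib : π i < π b)
    (hbet : ∀ c ∈ B, c ≠ b → (π c < π i ↔ π c < π b)) :
    B.filter (fun x => (π * Equiv.swap i b) x < (π * Equiv.swap i b) i)
      = insert b (B.filter (fun x => π x < π i)) := by
  have hσi : (π * Equiv.swap i b) i = π b := by simp [Equiv.Perm.mul_apply]
  ext x
  simp only [Finset.mem_filter, Finset.mem_insert, hσi]
  by_cases hxb : x = b
  · subst hxb
    rw [swap_apply_mem π hi hb, if_pos rfl]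
    simp [hb, hib]
  · by_cases hxB : x ∈ B
    · rw [swap_apply_mem π hi hxB, if_neg hxb]
      simp [hxB, hxb, (hbet x hxB hxb).symm]
    · simp [hxB, hxb]

lemma filter_swap_down (π : Equiv.Perm (Fin n)) {B : Finset (Fin n)} {i b : Fin n}
    (hi : i ∉ B) (hb : b ∈ B) (hbi : π b < π i)
    (hbet : ∀ c ∈ B, c ≠ b → (π c < π i ↔ π c < π b)) :
    B.filter (fun x => (π * Equiv.swap i b) x < (π * Equiv.swap i b) i)
      = (B.filter (fun x => π x < π i)).erase b := by
  have hσi : (π * Equiv.swap i b) i = π b := by simp [Equiv.Perm.mul_apply]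
  ext x
  simp only [Finset.mem_filter, Finset.mem_erase, hσi]
  by_cases hxb : x = b
  · subst hxb
    rw [swap_apply_mem π hi hb, if_pos rfl]
    simp [asymm hbi]
  · by_cases hxB : x ∈ B
    · rw [swap_apply_mem π hi hxB, if_neg hxb]
      simp [hxB, hxb, hbet x hxB hxb]
    · simp [hxB, hxb]


/-- the ranked item immediately after `i` (junk value `i` if none). -/
noncomputable def upb (B : Finset (Fin n)) (i : Fin n) (π : Equiv.Perm (Fin n)) : Fin n :=
  if h : (B.filter (fun b => π i < π b)).Nonempty then
    π.symm (((B.filter (fun b => π i < π b)).image π).min' (h.image π))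
  else i

/-- the ranked item immediately before `i` (junk value `i` if none). -/
noncomputable def downb (B : Finset (Fin n)) (i : Fin n) (π : Equiv.Perm (Fin n)) : Fin n :=
  if h : (B.filter (fun b => π b < π i)).Nonempty then
    π.symm (((B.filter (fun b => π b < π i)).image π).max' (h.image π))
  else i

lemma upb_spec {B : Finset (Fin n)} {i : Fin n} {π : Equiv.Perm (Fin n)}
    (h : (B.filter (fun b => π i < π b)).Nonempty) :
    upb B i π ∈ B ∧ π i < π (upb B i π) ∧ ∀ c ∈ B, π i < π c → π (upb B i π) ≤ π c := by
  rw [upb, dif_pos h]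
  set m := ((B.filter (fun b => π i < π b)).image π).min' (h.image π) with hm
  have hmem : m ∈ (B.filter (fun b => π i < π b)).image π := Finset.min'_mem _ _
  obtain ⟨c, hc, hcm⟩ := Finset.mem_image.1 hmem
  have hec : π.symm m = c := by rw [← hcm]; exact π.symm_apply_apply c
  rw [hec]
  obtain ⟨hcB, hci⟩ := Finset.mem_filter.1 hc
  refine ⟨hcB, hci, fun d hd hdi => ?_⟩
  have hd' : π d ∈ (B.filter (fun b => π i < π b)).image π :=
    Finset.mem_image_of_mem _ (Finset.mem_filter.2 ⟨hd, hdi⟩)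
  calc π c = m := hcm
    _ ≤ π d := Finset.min'_le _ _ hd'

lemma upb_eq {B : Finset (Fin n)} {i b : Fin n} {π : Equiv.Perm (Fin n)}
    (hb : b ∈ B) (hib : π i < π b) (hmin : ∀ c ∈ B, π i < π c → π b ≤ π c) :
    upb B i π = b := by
  have h : (B.filter (fun b => π i < π b)).Nonempty := ⟨b, Finset.mem_filter.2 ⟨hb, hib⟩⟩
  rw [upb, dif_pos h]
  have hbmem : π b ∈ (B.filter (fun b => π i < π b)).image π :=
    Finset.mem_image_of_mem _ (Finset.mem_filter.2 ⟨hb, hib⟩)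
  have hval : ((B.filter (fun b => π i < π b)).image π).min' (h.image π) = π b := by
    apply le_antisymm
    · exact Finset.min'_le _ _ hbmem
    · apply Finset.le_min'
      intro y hy
      obtain ⟨c, hc, rfl⟩ := Finset.mem_image.1 hy
      obtain ⟨hcB, hci⟩ := Finset.mem_filter.1 hc
      exact hmin c hcB hci
  rw [hval, π.symm_apply_apply]

lemma downb_spec {B : Finset (Fin n)} {i : Fin n} {π : Equiv.Perm (Fin n)}
    (h : (B.filter (fun b => π b < π i)).Nonempty) :
    downb B i π ∈ B ∧ π (downb B i π) < π i ∧ ∀ c ∈ B, π c < π i → π c ≤ π (downb B i π) := by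
  rw [downb, dif_pos h]
  set m := ((B.filter (fun b => π b < π i)).image π).max' (h.image π) with hm
  have hmem : m ∈ (B.filter (fun b => π b < π i)).image π := Finset.max'_mem _ _
  obtain ⟨c, hc, hcm⟩ := Finset.mem_image.1 hmem
  have hec : π.symm m = c := by rw [← hcm]; exact π.symm_apply_apply c
  rw [hec]
  obtain ⟨hcB, hci⟩ := Finset.mem_filter.1 hc
  refine ⟨hcB, hci, fun d hd hdi => ?_⟩
  have hd' : π d ∈ (B.filter (fun b => π b < π i)).image π :=
    Finset.mem_image_of_mem _ (Finset.mem_filter.2 ⟨hd, hdi⟩)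
  calc π d ≤ m := Finset.le_max' _ _ hd'
    _ = π c := hcm.symm

lemma downb_eq {B : Finset (Fin n)} {i b : Fin n} {π : Equiv.Perm (Fin n)}
    (hb : b ∈ B) (hbi : π b < π i) (hmax : ∀ c ∈ B, π c < π i → π c ≤ π b) :
    downb B i π = b := by
  have h : (B.filter (fun b => π b < π i)).Nonempty := ⟨b, Finset.mem_filter.2 ⟨hb, hbi⟩⟩
  rw [downb, dif_pos h]
  have hbmem : π b ∈ (B.filter (fun b => π b < π i)).image π :=
    Finset.mem_image_of_mem _ (Finset.mem_filter.2 ⟨hb, hbi⟩)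
  have hval : ((B.filter (fun b => π b < π i)).image π).max' (h.image π) = π b := by
    apply le_antisymm
    · apply Finset.max'_le
      intro y hy
      obtain ⟨c, hc, rfl⟩ := Finset.mem_image.1 hy
      obtain ⟨hcB, hci⟩ := Finset.mem_filter.1 hc
      exact hmax c hcB hci
    · exact Finset.le_max' _ _ hbmem
  rw [hval, π.symm_apply_apply]

lemma hbet_up {B : Finset (Fin n)} {i b : Fin n} {π : Equiv.Perm (Fin n)}
    (hi : i ∉ B) (hib : π i < π b) (hmin : ∀ c ∈ B, π i < π c → π b ≤ π c) :
    ∀ c ∈ B, c ≠ b → (π c < π i ↔ π c < π b) := by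
  intro c hc hcb
  have hci : c ≠ i := fun h => hi (h ▸ hc)
  have hne1 : π c ≠ π i := fun h => hci (π.injective h)
  constructor
  · intro h; exact h.trans hib
  · intro h
    rcases lt_trichotomy (π c) (π i) with h' | h' | h'
    · exact h'
    · exact absurd h' hne1
    · exact absurd h (not_lt.2 (hmin c hc h'))

lemma hbet_down {B : Finset (Fin n)} {i b : Fin n} {π : Equiv.Perm (Fin n)}
    (hbi : π b < π i) (hmax : ∀ c ∈ B, π c < π i → π c ≤ π b) :
    ∀ c ∈ B, c ≠ b → (π c < π i ↔ π c < π b) := by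
  intro c hc hcb
  have hne2 : π c ≠ π b := fun h => hcb (π.injective h)
  constructor
  · intro h; exact lt_of_le_of_ne (hmax c hc h) hne2
  · intro h; exact h.trans hbi

lemma consistent_swap {U : TIR n} {π : Equiv.Perm (Fin n)} {i b : Fin n}
    (hπ : π ∈ U.consistent) (hi : i ∉ U.ranked)
    (hbet : ∀ c ∈ U.ranked, c ≠ b → (π c < π i ↔ π c < π b)) :
    π * Equiv.swap i b ∈ U.consistent := by
  rw [mem_consistent] at hπ ⊢
  intro s t hst a ha b' hb'
  exact (swap_lt π hi hbet (mem_ranked ha) (mem_ranked hb')).2 (hπ s t hst a ha b' hb')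

lemma count_split {B : Finset (Fin n)} {i : Fin n} {π : Equiv.Perm (Fin n)} (hi : i ∉ B) :
    (B.filter (fun b => π b < π i)).card + (B.filter (fun b => π i < π b)).card = B.card := by
  have h2 : B.filter (fun a => ¬ π a < π i) = B.filter (fun b => π i < π b) := by
    apply Finset.filter_congr
    intro x hx
    have hxi : x ≠ i := fun h => hi (h ▸ hx)
    have hne : π x ≠ π i := fun h => hxi (π.injective h)
    simp only [not_lt, eq_iff_iff]
    exact ⟨fun h => lt_of_le_of_ne h hne.symm, fun h => h.le⟩
  rw [← h2]
  exact Finset.card_filter_add_card_filter_not (p := fun b => π b < π i)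

lemma fiber_step (U : TIR n) (i : Fin n) (hi : i ∉ U.ranked) (r : ℕ)
    (hr : r + 1 ≤ U.ranked.card) :
    (U.consistent.filter
        (fun π => (U.ranked.filter (fun b => π b < π i)).card = r)).card
      = (U.consistent.filter
        (fun π => (U.ranked.filter (fun b => π b < π i)).card = r + 1)).card := by
  apply Finset.card_nbij' (fun π => π * Equiv.swap i (upb U.ranked i π))
    (fun π => π * Equiv.swap i (downb U.ranked i π))
  · -- forward maps into fiber (r+1)
    intro π hπ
    obtain ⟨hπc, hπr⟩ := Finset.mem_filter.1 hπ
    have hC : (U.ranked.filter (fun b => π i < π b)).Nonempty := by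
      rw [← Finset.card_pos]
      have := count_split (π := π) hi
      omega
    obtain ⟨hbB, hib, hmin⟩ := upb_spec hC
    have hbet := hbet_up hi hib hmin
    refine Finset.mem_filter.2 ⟨consistent_swap hπc hi hbet, ?_⟩
    have hnm : upb U.ranked i π ∉ U.ranked.filter (fun x => π x < π i) := by
      simp only [Finset.mem_filter, not_and]
      intro _
      exact asymm hib
    rw [filter_swap_up π hi hbB hib hbet, Finset.card_insert_of_notMem hnm, hπr]
  · -- backward maps into fiber r
    intro π hπ
    obtain ⟨hπc, hπr⟩ := Finset.mem_filter.1 hπ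
    have hD : (U.ranked.filter (fun b => π b < π i)).Nonempty := by
      rw [← Finset.card_pos, hπr]; omega
    obtain ⟨hbB, hbi, hmax⟩ := downb_spec hD
    have hbet := hbet_down hbi hmax
    refine Finset.mem_filter.2 ⟨consistent_swap hπc hi hbet, ?_⟩
    have hm : downb U.ranked i π ∈ U.ranked.filter (fun x => π x < π i) :=
      Finset.mem_filter.2 ⟨hbB, hbi⟩
    rw [filter_swap_down π hi hbB hbi hbet, Finset.card_erase_of_mem hm, hπr]
    omega
  · -- left inverse
    intro π hπ
    obtain ⟨hπc, hπr⟩ := Finset.mem_filter.1 hπ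
    have hC : (U.ranked.filter (fun b => π i < π b)).Nonempty := by
      rw [← Finset.card_pos]
      have := count_split (π := π) hi
      omega
    obtain ⟨hbB, hib, hmin⟩ := upb_spec hC
    have hbet := hbet_up hi hib hmin
    set b := upb U.ranked i π with hbdef
    set σ := π * Equiv.swap i b with hσ
    have hσi : σ i = π b := by simp [hσ, Equiv.Perm.mul_apply]
    have hσb : σ b = π i := by simp [hσ, Equiv.Perm.mul_apply]
    have hdb : downb U.ranked i σ = b := by
      apply downb_eq hbB
      · rw [hσb, hσi]; exact hib
      · intro c hc hci
        by_cases hcb : c = b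
        · subst hcb; exact le_rfl
        · have hcσ : σ c = π c := by
            rw [hσ, swap_apply_mem π hi hc, if_neg hcb]
          rw [hcσ, hσi] at hci
          rw [hcσ, hσb]
          exact ((hbet c hc hcb).2 hci).le
    show σ * Equiv.swap i (downb U.ranked i σ) = π
    rw [hdb, hσ, mul_assoc, Equiv.swap_mul_self, mul_one]
  · -- right inverse
    intro π hπ
    obtain ⟨hπc, hπr⟩ := Finset.mem_filter.1 hπ
    have hD : (U.ranked.filter (fun b => π b < π i)).Nonempty := by
      rw [← Finset.card_pos, hπr]; omega
    obtain ⟨hbB, hbi, hmax⟩ := downb_spec hD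
    have hbet := hbet_down hbi hmax
    set b := downb U.ranked i π with hbdef
    set σ := π * Equiv.swap i b with hσ
    have hσi : σ i = π b := by simp [hσ, Equiv.Perm.mul_apply]
    have hσb : σ b = π i := by simp [hσ, Equiv.Perm.mul_apply]
    have hub : upb U.ranked i σ = b := by
      apply upb_eq hbB
      · rw [hσb, hσi]; exact hbi
      · intro c hc hci
        by_cases hcb : c = b
        · subst hcb; exact le_rfl
        · have hcσ : σ c = π c := by
            rw [hσ, swap_apply_mem π hi hc, if_neg hcb]
          rw [hcσ, hσi] at hci
          rw [hcσ, hσb]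
          by_contra hlt
          push_neg at hlt
          exact absurd ((hbet c hc hcb).1 hlt) (asymm hci)
    show σ * Equiv.swap i (upb U.ranked i σ) = π
    rw [hub, hσ, mul_assoc, Equiv.swap_mul_self, mul_one]


lemma fiber_const (U : TIR n) (i : Fin n) (hi : i ∉ U.ranked) :
    ∀ r ≤ U.ranked.card,
      (U.consistent.filter
        (fun π => (U.ranked.filter (fun b => π b < π i)).card = r)).card
        = (U.consistent.filter
        (fun π => (U.ranked.filter (fun b => π b < π i)).card = 0)).card := by
  intro r
  induction r with
  | zero => intro _; rfl
  | succ m ih =>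
    intro hm
    rw [← fiber_step U i hi m hm]
    exact ih (by omega)

end TIRProof

/-- If `i` is unranked in `U` and `k = |B_U|`, then the relative position of `i`
among the ranked items is uniform over `{0,1,…,k}`: for each `r ≤ k`, the number of
consistent permutations placing exactly `r` ranked items before `i` is `|S_U|/(k+1)`. -/
theorem unranked_position_uniform (n : ℕ) (U : TIR n) (i : Fin n)
    (hi : i ∉ U.ranked) (r : ℕ) (hr : r ≤ U.ranked.card) :
    ((U.consistent.filter
        (fun π => (U.ranked.filter (fun b => π b < π i)).card = r)).card : ℚ)
      = (U.consistent.card : ℚ) / ((U.ranked.card : ℚ) + 1) := by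
  set k := U.ranked.card with hk
  set c := (U.consistent.filter
      (fun π => (U.ranked.filter (fun b => π b < π i)).card = 0)).card with hc
  have hfib := TIRProof.fiber_const U i hi
  have hsum : U.consistent.card = ∑ s ∈ Finset.range (k + 1),
      (U.consistent.filter
        (fun π => (U.ranked.filter (fun b => π b < π i)).card = s)).card := by
    apply Finset.card_eq_sum_card_fiberwise
    intro π _
    simp only [Finset.mem_coe, Finset.mem_range]
    have : (U.ranked.filter (fun b => π b < π i)).card ≤ k :=
      Finset.card_filter_le _ _
    omega
  have hsum2 : U.consistent.card = (k + 1) * c := by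
    rw [hsum]
    rw [Finset.sum_congr rfl (fun s hs => hfib s (by
      rw [Finset.mem_range] at hs; omega))]
    rw [Finset.sum_const, Finset.card_range, smul_eq_mul]
  rw [hfib r hr, hsum2]
  have hne : ((k : ℚ) + 1) ≠ 0 := by positivity
  rw [Nat.cast_mul, Nat.cast_add, Nat.cast_one, mul_comm, mul_div_assoc, div_self hne, mul_one]
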